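/- Let (X, M) be a measurable space and N a nonempty collection of sets in M. For every σ-finite measure μ on (X, M) there exists a unique decomposition μ = μ_N + μ_N^⊥ as a sum of measures on (X, M), where μ_N is carried by N (i.e., there exist N₁, N₂, … ∈ N with μ_N(X \ ⋃ᵢ Nᵢ) = 0) and μ_N^⊥ is singular to N (i.e., μ_N^⊥(N) = 0 for every N ∈ N). -/

import Mathlib

open MeasureTheory Set Filter ENNReal

/-- Lebesgue-type decomposition: a σ-finite measure splits uniquely into a part carried by a
nonempty family `𝒩` of measurable sets and a part singular to `𝒩`. -/
theorem carried_singular_decomposition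
    {X : Type*} [MeasurableSpace X] (𝒩 : Set (Set X)) (hne : 𝒩.Nonempty)
    (hmeas : ∀ A ∈ 𝒩, MeasurableSet A)
    (μ : Measure X) [SigmaFinite μ] :
    ∃! p : Measure X × Measure X,
      μ = p.1 + p.2 ∧
      (∃ f : ℕ → Set X, (∀ i, f i ∈ 𝒩) ∧ p.1 ((⋃ i, f i)ᶜ) = 0) ∧
      (∀ A ∈ 𝒩, p.2 A = 0) := by
  obtain ⟨ν, hνfin, hμν, hνμ⟩ := exists_isFiniteMeasure_absolutelyContinuous μ
  obtain ⟨A₀, hA₀⟩ := hne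
  set S : Set ℝ≥0∞ :=
    {r | ∃ f : ℕ → Set X, (∀ i, f i ∈ 𝒩) ∧ ν (⋃ i, f i) = r} with hS
  have hSne : S.Nonempty := ⟨ν (⋃ _i : ℕ, A₀), fun _ => A₀, fun _ => hA₀, rfl⟩
  have hSbdd : BddAbove S := ⟨ν Set.univ, fun r ⟨f, _, hf⟩ => hf ▸ measure_mono (subset_univ _)⟩
  obtain ⟨u, -, hu_tendsto, hu_mem⟩ := exists_seq_tendsto_sSup hSne hSbdd
  choose F hFmem hFval using hu_mem
  set g : ℕ → Set X := fun k => F k.unpair.1 k.unpair.2 with hg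
  have hgmem : ∀ k, g k ∈ 𝒩 := fun k => hFmem _ _
  set U : Set X := ⋃ k, g k with hUdef
  have hU : MeasurableSet U := MeasurableSet.iUnion fun k => hmeas _ (hgmem k)
  have hUS : ν U ∈ S := ⟨g, hgmem, rfl⟩
  have hUeq : ⋃ (i : ℕ) (j : ℕ), F i j = U := (Set.iUnion_unpair F).symm
  -- ν U achieves the supremum
  have hνU : ν U = sSup S := by
    refine le_antisymm (le_csSup hSbdd hUS) ?_
    refine le_of_tendsto' hu_tendsto fun n => ?_
    rw [← hFval n]
    refine measure_mono ?_
    rw [← hUeq]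
    exact iUnion_subset fun j => subset_iUnion₂ (s := fun i j => F i j) n j
  -- maximality: every member of 𝒩 is ν-a.e. (hence μ-a.e.) contained in U
  have hmax : ∀ A ∈ 𝒩, μ (A \ U) = 0 := by
    intro A hA
    refine hμν ?_
    have hh : ν (A ∪ U) ∈ S := by
      refine ⟨fun n => Nat.casesOn n A g, fun n => Nat.casesOn n hA hgmem, ?_⟩
      congr 1
      ext x
      simp only [mem_iUnion, mem_union]
      constructor
      · rintro ⟨(_ | n), hx⟩
        · exact Or.inl hx
        · exact Or.inr (mem_iUnion.2 ⟨n, hx⟩)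
      · rintro (hx | hx)
        · exact ⟨0, hx⟩
        · obtain ⟨n, hn⟩ := mem_iUnion.1 hx
          exact ⟨n + 1, hn⟩
    have hle : ν U + ν (A \ U) ≤ ν U + 0 := by
      rw [add_zero, ← measure_union disjoint_sdiff_self_right ((hmeas A hA).diff hU),
        Set.union_diff_self, hνU, Set.union_comm]
      exact le_csSup hSbdd hh
    exact le_antisymm (ENNReal.le_of_add_le_add_left (measure_ne_top ν U) hle)
      (zero_le')
  refine ⟨(μ.restrict U, μ.restrict Uᶜ), ⟨?_, ⟨g, hgmem, ?_⟩, ?_⟩, ?_⟩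
  · exact (Measure.restrict_add_restrict_compl hU).symm
  · rw [Measure.restrict_apply hU.compl]
    simp
  · intro A hA
    rw [Measure.restrict_apply (hmeas A hA), ← Set.diff_eq]
    exact hmax A hA
  -- uniqueness
  rintro ⟨q₁, q₂⟩ ⟨hq, ⟨g', hg'mem, hg'null⟩, hqsing⟩
  set W : Set X := ⋃ i, g' i with hW
  set V : Set X := U ∪ W with hV
  have hVmeas : MeasurableSet V :=
    hU.union (MeasurableSet.iUnion fun i => hmeas _ (hg'mem i))
  have hq2V : q₂ V = 0 :=
    measure_union_null (measure_iUnion_null fun k => hqsing _ (hgmem k))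
      (measure_iUnion_null fun i => hqsing _ (hg'mem i))
  have hμVU : μ (V \ U) = 0 := by
    rw [hV, Set.union_diff_left, hW, Set.iUnion_diff]
    exact measure_iUnion_null fun i => hmax _ (hg'mem i)
  have hq1null : ∀ s : Set X, s ⊆ Vᶜ → q₁ s = 0 := by
    intro s hs
    refine measure_mono_null (hs.trans ?_) hg'null
    exact compl_subset_compl.2 subset_union_right
  have hq1inter : ∀ A : Set X, q₁ (A ∩ V) = μ (A ∩ V) := by
    intro A
    have h2 : q₂ (A ∩ V) = 0 := measure_mono_null inter_subset_right hq2V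
    rw [hq]
    simp [h2]
  have hμAV : ∀ A : Set X, μ (A ∩ V) = μ (A ∩ U) := by
    intro A
    refine le_antisymm ?_ (measure_mono (inter_subset_inter_right A subset_union_left))
    calc μ (A ∩ V) ≤ μ ((A ∩ U) ∪ (V \ U)) := by
          refine measure_mono ?_
          rintro x ⟨hxA, hxV⟩
          by_cases hx : x ∈ U
          · exact Or.inl ⟨hxA, hx⟩
          · exact Or.inr ⟨hxV, hx⟩
      _ ≤ μ (A ∩ U) + μ (V \ U) := measure_union_le _ _
      _ = μ (A ∩ U) := by rw [hμVU, add_zero]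
  have hq1 : q₁ = μ.restrict U := by
    refine Measure.ext fun A hA => ?_
    have h1 : q₁ A = q₁ (A ∩ V) := by
      refine le_antisymm ?_ (measure_mono inter_subset_left)
      calc q₁ A ≤ q₁ (A ∩ V) + q₁ (A \ V) := measure_le_inter_add_diff _ _ _
        _ = q₁ (A ∩ V) := by
            rw [hq1null (A \ V) (fun x hx => hx.2), add_zero]
    rw [h1, hq1inter, hμAV, Measure.restrict_apply hA]
  have hq2 : q₂ = μ.restrict Uᶜ := by
    refine Measure.ext fun A hA => ?_
    have h1 : q₂ A = q₂ (A \ V) := by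
      refine le_antisymm ?_ (measure_mono diff_subset)
      calc q₂ A ≤ q₂ (A ∩ V) + q₂ (A \ V) := measure_le_inter_add_diff _ _ _
        _ = q₂ (A \ V) := by
            rw [measure_mono_null inter_subset_right hq2V, zero_add]
    have h2 : q₂ (A \ V) = μ (A \ V) := by
      have h3 : q₁ (A \ V) = 0 := hq1null _ fun x hx => hx.2
      rw [hq]
      simp [h3]
    have h4 : μ (A \ V) = μ (A \ U) := by
      refine le_antisymm (measure_mono (diff_subset_diff_right subset_union_left)) ?_
      calc μ (A \ U) ≤ μ ((A \ V) ∪ (V \ U)) := by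
            refine measure_mono ?_
            rintro x ⟨hxA, hxU⟩
            by_cases hx : x ∈ V
            · exact Or.inr ⟨hx, hxU⟩
            · exact Or.inl ⟨hxA, hx⟩
        _ ≤ μ (A \ V) + μ (V \ U) := measure_union_le _ _
        _ = μ (A \ V) := by rw [hμVU, add_zero]
    rw [h1, h2, h4, Measure.restrict_apply hA, ← Set.diff_eq]
  exact Prod.ext hq1 hq2
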